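/- Let g : ℝ≥0 → ℝ≥0 be continuously differentiable with ∫₀^∞ g(t) dt < +∞ and g'(t) ≤ ξ for all t ≥ 0 and some constant ξ > 0. Then lim_{t → +∞} g(t) = 0. -/

import Mathlib

open Set Filter MeasureTheory

/-- One-sided derivative-bound version of Barbălat's lemma: a nonnegative, integrable,
continuously differentiable function on `[0, ∞)` whose derivative is bounded above
tends to `0` at `+∞`. -/
theorem stmt_18 (g : ℝ → ℝ) (hg : ContDiff ℝ 1 g)
    (hgnonneg : ∀ t ≥ (0 : ℝ), 0 ≤ g t)
    (hgint : IntegrableOn g (Ici 0))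
    (ξ : ℝ) (hξ : 0 < ξ) (hderiv : ∀ t ≥ (0 : ℝ), deriv g t ≤ ξ) :
    Tendsto g atTop (nhds 0) := by
  have hgc : Continuous g := hg.continuous
  have hgd : Differentiable ℝ g := hg.differentiable one_ne_zero
  -- one-sided Lipschitz bound: g b - g a ≤ ξ (b - a) for 0 ≤ a ≤ b
  have hmono : MonotoneOn (fun t => ξ * t - g t) (Ici 0) := by
    apply monotoneOn_of_deriv_nonneg (convex_Ici 0)
    · exact ((continuous_const.mul continuous_id).sub hgc).continuousOn
    · intro t ht
      exact (((differentiable_const ξ).mul differentiable_id).sub hgd t).differentiableWithinAt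
    · intro t ht
      rw [interior_Ici] at ht
      have hd : deriv (fun t => ξ * t - g t) t = ξ - deriv g t := by
        have hh : HasDerivAt (fun t => ξ * t - g t) (ξ * 1 - deriv g t) t :=
          ((hasDerivAt_id t).const_mul ξ).sub (hgd t).hasDerivAt
        simpa using hh.deriv
      rw [hd]
      linarith [hderiv t (le_of_lt ht)]
  have key : ∀ a b : ℝ, 0 ≤ a → a ≤ b → g b - g a ≤ ξ * (b - a) := by
    intro a b ha hab
    have := hmono (mem_Ici.2 ha) (mem_Ici.2 (ha.trans hab)) hab
    simp only at this
    nlinarith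
  -- tail integral tends to 0
  have hgint' : IntegrableOn g (Ioi 0) := hgint.mono_set Ioi_subset_Ici_self
  have htail : Tendsto (fun x => ∫ t in Ici x, g t) atTop (nhds 0) := by
    have h1 : Tendsto (fun x => ∫ t in (0:ℝ)..x, g t) atTop (nhds (∫ t in Ioi 0, g t)) :=
      intervalIntegral_tendsto_integral_Ioi 0 hgint' tendsto_id
    have h2 : ∀ᶠ x in atTop, (∫ t in Ici x, g t) =
        (∫ t in Ioi 0, g t) - ∫ t in (0:ℝ)..x, g t := by
      filter_upwards [eventually_ge_atTop (0:ℝ)] with x hx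
      rw [integral_Ici_eq_integral_Ioi, intervalIntegral.integral_of_le hx]
      have hsplit : (∫ t in Ioi 0, g t) = (∫ t in Ioc 0 x, g t) + ∫ t in Ioi x, g t := by
        rw [← setIntegral_union (Ioc_disjoint_Ioi le_rfl) measurableSet_Ioi
          (hgint'.mono_set Ioc_subset_Ioi_self) (hgint'.mono_set (Ioi_subset_Ioi hx)),
          Ioc_union_Ioi_eq_Ioi hx]
      linarith
    have h3 : Tendsto (fun x => (∫ t in Ioi 0, g t) - ∫ t in (0:ℝ)..x, g t) atTop
        (nhds ((∫ t in Ioi 0, g t) - ∫ t in Ioi 0, g t)) := tendsto_const_nhds.sub h1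
    rw [sub_self] at h3
    exact h3.congr' (h2.mono fun x hx => hx.symm)
  -- main argument by contradiction
  rw [Metric.tendsto_atTop]
  by_contra hcon
  push_neg at hcon
  obtain ⟨ε, hε, hfreq⟩ := hcon
  set δ := ε / (2 * ξ) with hδdef
  have hδ : 0 < δ := by positivity
  have hξδ : ξ * δ = ε / 2 := by
    field_simp [hδdef]
    rw [hδdef]
    field_simp
  have hc : 0 < ε / 2 * δ := by positivity
  obtain ⟨M, hM⟩ := eventually_atTop.1 ((htail.eventually (gt_mem_nhds hc)).and
    (eventually_ge_atTop (0:ℝ)))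
  have hM0 : (0:ℝ) ≤ M := (hM M le_rfl).2
  obtain ⟨t, ht, hgt⟩ := hfreq (M + δ)
  have htδ : M ≤ t - δ := by linarith
  have ht0 : (0:ℝ) ≤ t - δ := le_trans hM0 htδ
  have hgtε : ε ≤ g t := by
    have := hgnonneg t (by linarith)
    rw [Real.dist_eq, sub_zero, abs_of_nonneg this] at hgt
    exact hgt
  -- g ≥ ε/2 on Icc (t-δ) t
  have hlow : ∀ s ∈ Icc (t - δ) t, ε / 2 ≤ g s := by
    intro s hs
    have h1 := key s t (le_trans ht0 hs.1) hs.2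
    have h2 : t - s ≤ δ := by linarith [hs.1]
    nlinarith
  have hIccsub : Icc (t - δ) t ⊆ Ici (t - δ) := Icc_subset_Ici_self
  have hIciInt : IntegrableOn g (Ici (t - δ)) := hgint.mono_set (Ici_subset_Ici.2 ht0)
  have hbound : ε / 2 * δ ≤ ∫ s in Icc (t - δ) t, g s := by
    have h := setIntegral_ge_of_const_le measurableSet_Icc
      (measure_Icc_lt_top).ne hlow (hIciInt.mono_set hIccsub)
    have hvol : (volume (Icc (t - δ) t)).toReal = δ := by
      rw [Real.volume_Icc, ENNReal.toReal_ofReal (by linarith)]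
      ring
    rw [measureReal_def, hvol, smul_eq_mul] at h
    linarith
  have hmonoInt : (∫ s in Icc (t - δ) t, g s) ≤ ∫ s in Ici (t - δ), g s := by
    apply setIntegral_mono_set hIciInt
    · exact ae_restrict_of_forall_mem measurableSet_Ici
        (fun s hs => hgnonneg s (le_trans ht0 hs))
    · exact HasSubset.Subset.eventuallyLE hIccsub
  have htailsmall := (hM (t - δ) htδ).1
  linarith
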